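/- If σ is a cycle-alternating permutation of [2n], then for every cycle valley i, ucross(i,σ) + unest(i,σ) ≡ i−1 (mod 2), and for every cycle peak i, lcross(i,σ) + lnest(i,σ) ≡ i (mod 2). -/

import Mathlib

open Finset

def fixCt {n : ℕ} (σ : Equiv.Perm (Fin n)) : ℕ :=
  (univ.filter fun i => σ i = i).card

def cpeakCt {n : ℕ} (σ : Equiv.Perm (Fin n)) : ℕ :=
  (univ.filter fun i => σ⁻¹ i < i ∧ σ i < i).card

def cvalCt {n : ℕ} (σ : Equiv.Perm (Fin n)) : ℕ :=
  (univ.filter fun i => i < σ⁻¹ i ∧ i < σ i).card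

def cdriseCt {n : ℕ} (σ : Equiv.Perm (Fin n)) : ℕ :=
  (univ.filter fun i => σ⁻¹ i < i ∧ i < σ i).card

def cdfallCt {n : ℕ} (σ : Equiv.Perm (Fin n)) : ℕ :=
  (univ.filter fun i => i < σ⁻¹ i ∧ σ i < i).card

def ucrossCt {n : ℕ} (σ : Equiv.Perm (Fin n)) : ℕ :=
  (univ.filter fun p : Fin n × Fin n × Fin n × Fin n =>
    p.1 < p.2.1 ∧ p.2.1 < p.2.2.1 ∧ p.2.2.1 < p.2.2.2 ∧
    p.2.2.1 = σ p.1 ∧ p.2.2.2 = σ p.2.1).card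

def lcrossCt {n : ℕ} (σ : Equiv.Perm (Fin n)) : ℕ :=
  (univ.filter fun p : Fin n × Fin n × Fin n × Fin n =>
    p.1 < p.2.1 ∧ p.2.1 < p.2.2.1 ∧ p.2.2.1 < p.2.2.2 ∧
    p.1 = σ p.2.2.1 ∧ p.2.1 = σ p.2.2.2).card

def unestCt {n : ℕ} (σ : Equiv.Perm (Fin n)) : ℕ :=
  (univ.filter fun p : Fin n × Fin n × Fin n × Fin n =>
    p.1 < p.2.1 ∧ p.2.1 < p.2.2.1 ∧ p.2.2.1 < p.2.2.2 ∧
    p.2.2.2 = σ p.1 ∧ p.2.2.1 = σ p.2.1).card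

def lnestCt {n : ℕ} (σ : Equiv.Perm (Fin n)) : ℕ :=
  (univ.filter fun p : Fin n × Fin n × Fin n × Fin n =>
    p.1 < p.2.1 ∧ p.2.1 < p.2.2.1 ∧ p.2.2.1 < p.2.2.2 ∧
    p.1 = σ p.2.2.2 ∧ p.2.1 = σ p.2.2.1).card

def psnestCt {n : ℕ} (σ : Equiv.Perm (Fin n)) : ℕ :=
  (univ.filter fun p : Fin n × Fin n × Fin n =>
    p.1 < p.2.1 ∧ p.2.1 < p.2.2 ∧ σ p.2.1 = p.2.1 ∧ σ p.1 = p.2.2).card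

def invCt {n : ℕ} (σ : Equiv.Perm (Fin n)) : ℕ :=
  (univ.filter fun p : Fin n × Fin n => p.1 < p.2 ∧ σ p.2 < σ p.1).card

/-- Number of cycles of a permutation, counting fixed points as cycles. -/
def cycCt {n : ℕ} (σ : Equiv.Perm (Fin n)) : ℕ :=
  σ.cycleType.card + fixCt σ

def ucrossAt {n : ℕ} (σ : Equiv.Perm (Fin n)) (j : Fin n) : ℕ :=
  (univ.filter fun p : Fin n × Fin n × Fin n =>
    p.1 < j ∧ j < p.2.1 ∧ p.2.1 < p.2.2 ∧ p.2.1 = σ p.1 ∧ p.2.2 = σ j).card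

def unestAt {n : ℕ} (σ : Equiv.Perm (Fin n)) (j : Fin n) : ℕ :=
  (univ.filter fun p : Fin n × Fin n × Fin n =>
    p.1 < j ∧ j < p.2.1 ∧ p.2.1 < p.2.2 ∧ p.2.1 = σ j ∧ p.2.2 = σ p.1).card

def lcrossAt {n : ℕ} (σ : Equiv.Perm (Fin n)) (k : Fin n) : ℕ :=
  (univ.filter fun p : Fin n × Fin n × Fin n =>
    p.1 < p.2.1 ∧ p.2.1 < k ∧ k < p.2.2 ∧ p.1 = σ k ∧ p.2.1 = σ p.2.2).card

def lnestAt {n : ℕ} (σ : Equiv.Perm (Fin n)) (k : Fin n) : ℕ :=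
  (univ.filter fun p : Fin n × Fin n × Fin n =>
    p.1 < p.2.1 ∧ p.2.1 < k ∧ k < p.2.2 ∧ p.1 = σ p.2.2 ∧ p.2.1 = σ k).card

/-- `i` is a record (left-to-right maximum) of `σ`. -/
def IsRecord {n : ℕ} (σ : Equiv.Perm (Fin n)) (i : Fin n) : Prop :=
  ∀ j, j < i → σ j < σ i

/-- `i` is an antirecord (right-to-left minimum) of `σ`. -/
def IsAntirecord {n : ℕ} (σ : Equiv.Perm (Fin n)) (i : Fin n) : Prop :=
  ∀ j, i < j → σ i < σ j

def ujoinCt {n : ℕ} (σ : Equiv.Perm (Fin n)) : ℕ :=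
  (univ.filter fun p : Fin n × Fin n × Fin n =>
    p.1 < p.2.1 ∧ p.2.1 < p.2.2 ∧ p.2.1 = σ p.1 ∧ p.2.2 = σ p.2.1).card

def ljoinCt {n : ℕ} (σ : Equiv.Perm (Fin n)) : ℕ :=
  (univ.filter fun p : Fin n × Fin n × Fin n =>
    p.1 < p.2.1 ∧ p.2.1 < p.2.2 ∧ p.1 = σ p.2.1 ∧ p.2.1 = σ p.2.2).card



section Aux
variable {m : ℕ} (σ : Equiv.Perm (Fin m))

lemma card_filter_lt' (j : Fin m) : (univ.filter fun i : Fin m => i < j).card = j := by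
  have : (univ.filter fun i : Fin m => i < j) = Finset.Iio j := by
    ext i; simp [Finset.mem_Iio]
  rw [this, Fin.card_Iio]

lemma card_filter_sigma_lt (j : Fin m) :
    (univ.filter fun i : Fin m => σ i < j).card = j := by
  rw [← card_filter_lt' j]
  apply Finset.card_bij (fun i _ => σ i)
  · intro a ha; simp only [mem_filter, mem_univ, true_and] at *; exact ha
  · intro a _ b _ h; exact σ.injective h
  · intro b hb; simp only [mem_filter, mem_univ, true_and] at hb
    exact ⟨σ⁻¹ b, by simp [hb], by simp⟩

end Aux

section Main
variable {m : ℕ} (σ : Equiv.Perm (Fin m))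
    (hnodrise : ∀ i, ¬ (σ⁻¹ i < i ∧ i < σ i))
    (hnodfall : ∀ i, ¬ (i < σ⁻¹ i ∧ σ i < i))
    (hnofix : ∀ i, σ i ≠ i)

include hnodrise hnodfall hnofix in
lemma even_a (j : Fin m) :
    Even (univ.filter fun i : Fin m => i < j ∧ σ i < j).card := by
  classical
  set Sv := univ.filter fun i : Fin m => i < j ∧ i < σ i ∧ σ i < j with hSv
  set Sp := univ.filter fun i : Fin m => i < j ∧ σ i < i with hSp
  have hsplit : (univ.filter fun i : Fin m => i < j ∧ σ i < j).card
      = Sv.card + Sp.card := by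
    rw [← Finset.card_filter_add_card_filter_not
      (p := fun i => i < σ i) (s := univ.filter fun i : Fin m => i < j ∧ σ i < j)]
    congr 1
    · apply congrArg Finset.card; rw [Finset.filter_filter]; apply Finset.filter_congr; intro i _
      constructor
      · rintro ⟨⟨h1, h2⟩, h3⟩; exact ⟨h1, h3, h2⟩
      · rintro ⟨h1, h2, h3⟩; exact ⟨⟨h1, h3⟩, h2⟩
    · apply congrArg Finset.card; rw [Finset.filter_filter]; apply Finset.filter_congr; intro i _
      constructor
      · rintro ⟨⟨h1, h2⟩, h3⟩
        exact ⟨h1, lt_of_le_of_ne (le_of_not_gt h3) (hnofix i)⟩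
      · rintro ⟨h1, h2⟩; exact ⟨⟨h1, h2.trans h1⟩, not_lt.2 (le_of_lt h2)⟩
  have hbij : Sv.card = Sp.card := by
    apply Finset.card_bij (fun i _ => σ i)
    · intro a ha
      simp only [hSv, hSp, mem_filter, mem_univ, true_and] at *
      refine ⟨ha.2.2, ?_⟩
      have h1 : σ⁻¹ (σ a) < σ a := by simpa using ha.2.1
      have := hnodrise (σ a)
      have h2 : ¬ (σ a < σ (σ a)) := fun h => this ⟨h1, h⟩
      exact lt_of_le_of_ne (le_of_not_gt h2) (hnofix (σ a))
    · intro a _ b _ h; exact σ.injective h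
    · intro p hp
      simp only [hSp, hSv, mem_filter, mem_univ, true_and] at *
      refine ⟨σ⁻¹ p, ⟨?_, ?_, ?_⟩, by simp⟩
      · have h1 : σ⁻¹ p ≠ p := by
          intro h; exact hnofix p (by conv_lhs => rw [← h]; simp)
        have h2 : ¬ (p < σ⁻¹ p) := fun h => hnodfall p ⟨h, hp.2⟩
        exact lt_trans (lt_of_le_of_ne (le_of_not_gt h2) h1) hp.1
      · simp only [Equiv.Perm.coe_inv, Equiv.apply_symm_apply]
        have h1 : σ⁻¹ p ≠ p := by
          intro h; exact hnofix p (by conv_lhs => rw [← h]; simp)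
        have h2 : ¬ (p < σ⁻¹ p) := fun h => hnodfall p ⟨h, hp.2⟩
        exact lt_of_le_of_ne (le_of_not_gt h2) h1
      · simpa using hp.1
  rw [hsplit, hbij]; exact ⟨Sp.card, rfl⟩

end Main


section Counts
variable {m : ℕ} (σ : Equiv.Perm (Fin m))

lemma ucrossAt_eq (j : Fin m) :
    ucrossAt σ j = (univ.filter fun i : Fin m => i < j ∧ j < σ i ∧ σ i < σ j).card := by
  unfold ucrossAt
  apply Finset.card_bij (fun p _ => p.1)
  · rintro ⟨a, b, c⟩ hp
    simp only [mem_filter, mem_univ, true_and] at *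
    obtain ⟨h1, h2, h3, h4, h5⟩ := hp
    subst h4; subst h5; exact ⟨h1, h2, h3⟩
  · rintro ⟨a, b, c⟩ ha ⟨a', b', c'⟩ ha' h
    simp only [mem_filter, mem_univ, true_and] at *
    subst h
    obtain ⟨_, _, _, h4, h5⟩ := ha
    obtain ⟨_, _, _, h4', h5'⟩ := ha'
    subst h4; subst h5; subst h4'; subst h5'; rfl
  · intro i hi
    simp only [mem_filter, mem_univ, true_and] at hi
    exact ⟨⟨i, σ i, σ j⟩, by simp [hi.1, hi.2.1, hi.2.2], rfl⟩

lemma unestAt_eq (j : Fin m) (hj : j < σ j) :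
    unestAt σ j = (univ.filter fun i : Fin m => i < j ∧ σ j < σ i).card := by
  unfold unestAt
  apply Finset.card_bij (fun p _ => p.1)
  · rintro ⟨a, b, c⟩ hp
    simp only [mem_filter, mem_univ, true_and] at *
    obtain ⟨h1, h2, h3, h4, h5⟩ := hp
    subst h4; subst h5; exact ⟨h1, h3⟩
  · rintro ⟨a, b, c⟩ ha ⟨a', b', c'⟩ ha' h
    simp only [mem_filter, mem_univ, true_and] at *
    subst h
    obtain ⟨_, _, _, h4, h5⟩ := ha
    obtain ⟨_, _, _, h4', h5'⟩ := ha'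
    subst h4; subst h5; subst h4'; subst h5'; rfl
  · intro i hi
    simp only [mem_filter, mem_univ, true_and] at hi
    exact ⟨⟨i, σ j, σ i⟩, by simp [hi.1, hi.2, hj], rfl⟩

lemma lcrossAt_eq (k : Fin m) :
    lcrossAt σ k = (univ.filter fun l : Fin m => k < l ∧ σ k < σ l ∧ σ l < k).card := by
  unfold lcrossAt
  apply Finset.card_bij (fun p _ => p.2.2)
  · rintro ⟨a, b, c⟩ hp
    simp only [mem_filter, mem_univ, true_and] at *
    obtain ⟨h1, h2, h3, h4, h5⟩ := hp
    subst h4; subst h5; exact ⟨h3, h1, h2⟩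
  · rintro ⟨a, b, c⟩ ha ⟨a', b', c'⟩ ha' h
    simp only [mem_filter, mem_univ, true_and] at *
    subst h
    obtain ⟨_, _, _, h4, h5⟩ := ha
    obtain ⟨_, _, _, h4', h5'⟩ := ha'
    subst h4; subst h5; subst h4'; subst h5'; rfl
  · intro l hl
    simp only [mem_filter, mem_univ, true_and] at hl
    exact ⟨⟨σ k, σ l, l⟩, by simp [hl.1, hl.2.1, hl.2.2], rfl⟩

lemma lnestAt_eq (k : Fin m) (hk : σ k < k) :
    lnestAt σ k = (univ.filter fun l : Fin m => k < l ∧ σ l < σ k).card := by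
  unfold lnestAt
  apply Finset.card_bij (fun p _ => p.2.2)
  · rintro ⟨a, b, c⟩ hp
    simp only [mem_filter, mem_univ, true_and] at *
    obtain ⟨h1, h2, h3, h4, h5⟩ := hp
    subst h4; subst h5; exact ⟨h3, h1⟩
  · rintro ⟨a, b, c⟩ ha ⟨a', b', c'⟩ ha' h
    simp only [mem_filter, mem_univ, true_and] at *
    subst h
    obtain ⟨_, _, _, h4, h5⟩ := ha
    obtain ⟨_, _, _, h4', h5'⟩ := ha'
    subst h4; subst h5; subst h4'; subst h5'; rfl
  · intro l hl
    simp only [mem_filter, mem_univ, true_and] at hl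
    exact ⟨⟨σ l, σ k, l⟩, by simp [hl.1, hl.2, hk], rfl⟩

end Counts

theorem cycleAlternating_cross_nest_parity {n : ℕ} (σ : Equiv.Perm (Fin (2 * n)))
    (hnodrise : ∀ i, ¬ (σ⁻¹ i < i ∧ i < σ i))
    (hnodfall : ∀ i, ¬ (i < σ⁻¹ i ∧ σ i < i))
    (hnofix : ∀ i, σ i ≠ i) :
    ∀ i : Fin (2 * n),
      ((i < σ⁻¹ i ∧ i < σ i) →
        (ucrossAt σ i + unestAt σ i) % 2 = (i : ℕ) % 2) ∧
      ((σ⁻¹ i < i ∧ σ i < i) →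
        (lcrossAt σ i + lnestAt σ i) % 2 = ((i : ℕ) + 1) % 2) := by
  classical
  intro i
  constructor
  · rintro ⟨hv1, hv2⟩
    set B := univ.filter (fun t : Fin (2*n) => t < i ∧ i < σ t) with hB
    set A := univ.filter (fun t : Fin (2*n) => t < i ∧ σ t < i) with hA
    have hsum : ucrossAt σ i + unestAt σ i = B.card := by
      rw [ucrossAt_eq, unestAt_eq σ i hv2, hB,
        ← Finset.card_filter_add_card_filter_not
          (p := fun t => σ t < σ i) (s := univ.filter (fun t : Fin (2*n) => t < i ∧ i < σ t))]
      congr 1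
      · apply congrArg Finset.card
        rw [Finset.filter_filter]; apply Finset.filter_congr; intro t _
        constructor
        · rintro ⟨h1, h2, h3⟩; exact ⟨⟨h1, h2⟩, h3⟩
        · rintro ⟨⟨h1, h2⟩, h3⟩; exact ⟨h1, h2, h3⟩
      · apply congrArg Finset.card
        rw [Finset.filter_filter]; apply Finset.filter_congr; intro t _
        constructor
        · rintro ⟨h1, h2⟩; exact ⟨⟨h1, hv2.trans h2⟩, not_lt.2 (le_of_lt h2)⟩
        · rintro ⟨⟨h1, h2⟩, h3⟩
          have : σ t ≠ σ i := fun h => absurd (σ.injective h) (ne_of_lt h1)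
          exact ⟨h1, lt_of_le_of_ne (le_of_not_gt h3) (Ne.symm this)⟩
    have hab : A.card + B.card = (i : ℕ) := by
      rw [← card_filter_lt' (m := 2*n) i,
        ← Finset.card_filter_add_card_filter_not
          (p := fun t => σ t < i) (s := univ.filter (fun t : Fin (2*n) => t < i))]
      congr 1
      · apply congrArg Finset.card
        rw [hA, Finset.filter_filter]
      · apply congrArg Finset.card
        rw [hB, Finset.filter_filter]
        apply Finset.filter_congr; intro t _
        constructor
        · rintro ⟨h1, h2⟩; exact ⟨h1, not_lt.2 (le_of_lt h2)⟩
        · rintro ⟨h1, h2⟩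
          have : σ t ≠ i := by
            intro h
            have ht2 : t = σ⁻¹ i := by rw [← h]; simp
            rw [ht2] at h1; exact absurd (h1.trans hv1) (lt_irrefl _)
          exact ⟨h1, lt_of_le_of_ne (le_of_not_gt h2) (Ne.symm this)⟩
    have hev := even_a σ hnodrise hnodfall hnofix i
    rw [← hA] at hev
    obtain ⟨t, ht⟩ := hev
    omega
  · rintro ⟨hp1, hp2⟩
    set D := univ.filter (fun l : Fin (2*n) => i < l ∧ σ l < i) with hD
    set A := univ.filter (fun t : Fin (2*n) => t < i ∧ σ t < i) with hA
    have hsum : lcrossAt σ i + lnestAt σ i = D.card := by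
      rw [lcrossAt_eq, lnestAt_eq σ i hp2, hD,
        ← Finset.card_filter_add_card_filter_not
          (p := fun l => σ i < σ l) (s := univ.filter (fun l : Fin (2*n) => i < l ∧ σ l < i))]
      congr 1
      · apply congrArg Finset.card
        rw [Finset.filter_filter]; apply Finset.filter_congr; intro t _
        constructor
        · rintro ⟨h1, h2, h3⟩; exact ⟨⟨h1, h3⟩, h2⟩
        · rintro ⟨⟨h1, h2⟩, h3⟩; exact ⟨h1, h3, h2⟩
      · apply congrArg Finset.card
        rw [Finset.filter_filter]; apply Finset.filter_congr; intro t _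
        constructor
        · rintro ⟨h1, h2⟩; exact ⟨⟨h1, h2.trans hp2⟩, not_lt.2 (le_of_lt h2)⟩
        · rintro ⟨⟨h1, h2⟩, h3⟩
          have : σ t ≠ σ i := fun h => absurd (σ.injective h) (ne_of_gt h1)
          exact ⟨h1, lt_of_le_of_ne (le_of_not_gt h3) this⟩
    have hac : A.card + (D.card + 1) = (i : ℕ) := by
      have hCD : (univ.filter (fun l : Fin (2*n) => ¬ l < i ∧ σ l < i)).card = D.card + 1 := by
        have : (univ.filter (fun l : Fin (2*n) => ¬ l < i ∧ σ l < i))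
            = insert i D := by
          ext l
          simp only [hD, mem_filter, mem_univ, true_and, Finset.mem_insert]
          constructor
          · rintro ⟨h1, h2⟩
            rcases eq_or_lt_of_le (le_of_not_gt h1) with h | h
            · exact Or.inl h.symm
            · exact Or.inr ⟨h, h2⟩
          · rintro (rfl | ⟨h1, h2⟩)
            · exact ⟨lt_irrefl _, hp2⟩
            · exact ⟨not_lt.2 (le_of_lt h1), h2⟩
        rw [this, Finset.card_insert_of_notMem]
        simp [hD]
      rw [← hCD, ← card_filter_sigma_lt σ i,
        ← Finset.card_filter_add_card_filter_not
          (p := fun t => t < i) (s := univ.filter (fun t : Fin (2*n) => σ t < i))]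
      congr 1
      · apply congrArg Finset.card
        rw [hA, Finset.filter_filter]; apply Finset.filter_congr; intro t _; tauto
      · apply congrArg Finset.card
        rw [Finset.filter_filter]; apply Finset.filter_congr; intro t _; tauto
    have hev := even_a σ hnodrise hnodfall hnofix i
    rw [← hA] at hev
    obtain ⟨t, ht⟩ := hev
    omega
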